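/- Let a, b, x, y be positive real numbers with x > a·b and y ≥ b. Then e^{(ab/(a+1))·y} · ( e^{(ab/(1+a))·x} − 1 ) < e^{x y} − 1. -/
import Mathlib

/-- For positive reals `a, b, x, y` with `x > a b` and `y ≥ b`,
`e^{(ab/(a+1))y} (e^{(ab/(1+a))x} - 1) < e^{xy} - 1`. -/
theorem stmt_17 (a b x y : ℝ) (ha : 0 < a) (hb : 0 < b) (hx : 0 < x) (hy : 0 < y)
    (hxab : x > a * b) (hyb : y ≥ b) :
    Real.exp (a * b / (a + 1) * y) * (Real.exp (a * b / (1 + a) * x) - 1) <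
      Real.exp (x * y) - 1 := by
  have ha1 : (0:ℝ) < a + 1 := by linarith
  set c := a * b / (a + 1) with hc
  have hceq : a * b / (1 + a) = c := by rw [hc, add_comm]
  rw [hceq]
  have hcpos : 0 < c := by positivity
  -- key: c * (x + y) < x * y
  have key : c * (x + y) < x * y := by
    rw [hc, div_mul_eq_mul_div, div_lt_iff₀ ha1]
    have h1 : a * b * x ≤ a * x * y := by nlinarith [mul_le_mul_of_nonneg_left hyb (le_of_lt (mul_pos ha hx))]
    have h2 : a * b * y < x * y := by nlinarith [mul_lt_mul_of_pos_right hxab hy]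
    nlinarith
  have hexp : Real.exp (c * y) * (Real.exp (c * x) - 1)
      = Real.exp (c * (x + y)) - Real.exp (c * y) := by
    rw [mul_sub, mul_one, ← Real.exp_add]; ring_nf
  rw [hexp]
  have h3 : Real.exp (c * (x + y)) < Real.exp (x * y) := Real.exp_lt_exp.mpr key
  have h4 : (1:ℝ) ≤ Real.exp (c * y) := Real.one_le_exp (by positivity)
  linarith
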